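/- Let n ≥ 1 and let Λ = {λ_1 > λ_2 > … > λ_n > 0} be distinct positive reals. Define φ : T_Λ → ℝ^n by φ(H) = (U(1,1),…,U(1,n)), the first row of the unique orthogonal matrix U with H = U diag(λ_1,…,λ_n) Uᵀ and U(1,j) > 0 for all j. Then φ is a bijection from T_Λ onto S^{n−1}_{>0} = { x ∈ ℝ^n : ∑_{i=1}^n x_i² = 1 and x_i > 0 for all i }. -/

import Mathlib

open Matrix

/-- A matrix is tridiagonal: entries vanish when the indices differ by more than one. -/
def IsTridiagonal {n : ℕ} (H : Matrix (Fin n) (Fin n) ℝ) : Prop :=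
  ∀ i j : Fin n, ((i : ℕ) + 1 < (j : ℕ) ∨ (j : ℕ) + 1 < (i : ℕ)) → H i j = 0

/-- The set `T_Λ` of `n × n` real symmetric tridiagonal matrices with negative sub-diagonal
entries whose spectrum equals `Λ = {λs 0, …, λs (n-1)}`. -/
def TLam {n : ℕ} (lams : Fin n → ℝ) : Set (Matrix (Fin n) (Fin n) ℝ) :=
  {H | H.IsSymm ∧ IsTridiagonal H ∧
    (∀ i j : Fin n, (j : ℕ) + 1 = (i : ℕ) → H i j < 0) ∧
    spectrum ℝ H = Set.range lams}

/-- The open positive orthant `S^{n-1}_{>0}` of the unit sphere in `ℝⁿ`. -/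
def SposSet (n : ℕ) : Set (Fin n → ℝ) :=
  {x | (∑ i, x i ^ 2) = 1 ∧ ∀ i, 0 < x i}

open Submodule
open scoped RealInnerProductSpace
open InnerProductSpace

set_option maxHeartbeats 1000000

section Aux
variable {n : ℕ}

/-- Uniqueness of the orthogonal diagonalizer with positive row `i0`. -/
lemma U_unique (lams : Fin n → ℝ) (hinj : Function.Injective lams)
    (U V : Matrix (Fin n) (Fin n) ℝ)
    (hU1 : U * Uᵀ = 1) (hU2 : Uᵀ * U = 1)
    (hV1 : V * Vᵀ = 1) (hV2 : Vᵀ * V = 1)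
    (hUV : U * diagonal lams * Uᵀ = V * diagonal lams * Vᵀ)
    (i0 : Fin n)
    (hUpos : ∀ j, 0 < U i0 j) (hVpos : ∀ j, 0 < V i0 j) : U = V := by
  set W : Matrix (Fin n) (Fin n) ℝ := Uᵀ * V with hW
  have hcomm : diagonal lams * W = W * diagonal lams := by
    have h1 : Uᵀ * (U * diagonal lams * Uᵀ) * V = Uᵀ * (V * diagonal lams * Vᵀ) * V := by
      rw [hUV]
    calc diagonal lams * W = (Uᵀ * U) * diagonal lams * (Uᵀ * V) := by
          rw [hU2, Matrix.one_mul, hW]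
      _ = Uᵀ * (U * diagonal lams * Uᵀ) * V := by simp only [Matrix.mul_assoc]
      _ = Uᵀ * (V * diagonal lams * Vᵀ) * V := h1
      _ = (Uᵀ * V) * diagonal lams * (Vᵀ * V) := by simp only [Matrix.mul_assoc]
      _ = W * diagonal lams := by rw [hV2, Matrix.mul_one, hW]
  have hWoff : ∀ i j : Fin n, i ≠ j → W i j = 0 := by
    intro i j hij
    have := congrFun (congrFun hcomm i) j
    rw [Matrix.diagonal_mul, Matrix.mul_diagonal] at this
    have hl : lams i ≠ lams j := fun h => hij (hinj h)
    have : W i j * (lams i - lams j) = 0 := by linarith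
    rcases mul_eq_zero.1 this with h | h
    · exact h
    · exact absurd (by linarith : lams i = lams j) hl
  have hWdiag : ∀ j : Fin n, W j j ^ 2 = 1 := by
    intro j
    have hWtW : Wᵀ * W = 1 := by
      calc Wᵀ * W = Vᵀ * (U * Uᵀ) * V := by rw [hW]; simp [Matrix.transpose_mul, Matrix.mul_assoc]
        _ = 1 := by rw [hU1]; simpa using hV2
    have := congrFun (congrFun hWtW j) j
    rw [Matrix.mul_apply] at this
    have hsum : ∑ k, Wᵀ j k * W k j = W j j ^ 2 := by
      rw [Finset.sum_eq_single j]
      · simp [Matrix.transpose_apply, sq]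
      · intro k _ hk
        rw [Matrix.transpose_apply, hWoff k j hk, mul_zero]
      · simp
    rw [hsum] at this
    simpa using this
  have hVU : V = U * W := by
    calc V = (U * Uᵀ) * V := by rw [hU1, Matrix.one_mul]
      _ = U * W := by rw [hW, Matrix.mul_assoc]
  have hWone : W = 1 := by
    ext i j
    by_cases hij : i = j
    · subst hij
      have hV0 : V i0 i = U i0 i * W i i := by
        rw [hVU, Matrix.mul_apply]
        rw [Finset.sum_eq_single i]
        · intro k _ hk; rw [hWoff k i hk, mul_zero]
        · simp
      have hpos : 0 < W i i := by nlinarith [hUpos i, hVpos i, hV0]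
      have : (W i i - 1) * (W i i + 1) = 0 := by nlinarith [hWdiag i]
      rcases mul_eq_zero.1 this with h | h
      · simp [Matrix.one_apply]; linarith
      · linarith
    · rw [hWoff i j hij, Matrix.one_apply_ne hij]
  rw [hVU, hWone, Matrix.mul_one]

end Aux

section Aux2
variable {n : ℕ}

/-- Entry formula for `H = U D Uᵀ`. -/
lemma entry_formula (lams : Fin n → ℝ) (U : Matrix (Fin n) (Fin n) ℝ)
    (i j : Fin n) :
    (U * diagonal lams * Uᵀ) i j = ∑ k, lams k * (U i k * U j k) := by
  rw [Matrix.mul_apply]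
  refine Finset.sum_congr rfl fun k _ => ?_
  rw [Matrix.mul_diagonal]
  simp [Matrix.transpose_apply]; ring

/-- Three-term recurrence: `lams k * U j k = ∑ m, H m j * U m k`. -/
lemma recurrence (lams : Fin n → ℝ) (H U : Matrix (Fin n) (Fin n) ℝ)
    (hU1 : U * Uᵀ = 1) (hUd : H = U * diagonal lams * Uᵀ) (j k : Fin n) :
    lams k * U j k = ∑ m, H m j * U m k := by
  have hU2 : Uᵀ * U = 1 := mul_eq_one_comm.mp hU1
  have hmat : Uᵀ * H = diagonal lams * Uᵀ := by
    calc Uᵀ * H = (Uᵀ * U) * diagonal lams * Uᵀ := by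
          rw [hUd]; simp only [Matrix.mul_assoc]
      _ = diagonal lams * Uᵀ := by rw [hU2, Matrix.one_mul]
  have := congrFun (congrFun hmat k) j
  rw [Matrix.mul_apply, Matrix.diagonal_mul] at this
  rw [Matrix.transpose_apply] at this
  calc lams k * U j k = ∑ m, Uᵀ k m * H m j := by
        rw [this]
      _ = ∑ m, H m j * U m k := by
        refine Finset.sum_congr rfl fun m _ => ?_
        rw [Matrix.transpose_apply]; ring

/-- Row normalization. -/
lemma row_norm (U : Matrix (Fin n) (Fin n) ℝ) (hU1 : U * Uᵀ = 1) (j : Fin n) :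
    ∑ k, U j k * U j k = 1 := by
  have := congrFun (congrFun hU1 j) j
  rw [Matrix.mul_apply] at this
  simpa [Matrix.transpose_apply] using this

/-- Lanczos uniqueness: rows of orthogonal diagonalizers of Jacobi matrices
with the same spectrum data and the same first row coincide. -/
lemma lanczos_unique (lams : Fin n → ℝ)
    (H1 H2 U1 U2 : Matrix (Fin n) (Fin n) ℝ)
    (ht1 : IsTridiagonal H1) (hneg1 : ∀ i j : Fin n, (j : ℕ) + 1 = (i : ℕ) → H1 i j < 0)
    (ht2 : IsTridiagonal H2) (hneg2 : ∀ i j : Fin n, (j : ℕ) + 1 = (i : ℕ) → H2 i j < 0)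
    (hU1o : U1 * U1ᵀ = 1) (hU1d : H1 = U1 * diagonal lams * U1ᵀ)
    (hU2o : U2 * U2ᵀ = 1) (hU2d : H2 = U2 * diagonal lams * U2ᵀ)
    (h0 : ∀ h : 0 < n, U1 ⟨0, h⟩ = U2 ⟨0, h⟩) : U1 = U2 := by
  have key : ∀ j : ℕ, ∀ hj : j < n, U1 ⟨j, hj⟩ = U2 ⟨j, hj⟩ := by
    intro j
    induction j using Nat.strong_induction_on with
    | _ j IH =>
      intro hj
      match j with
      | 0 => exact h0 hj
      | jp + 1 =>
        have hjp : jp < n := by omega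
        set jF : Fin n := ⟨jp, hjp⟩
        set j1 : Fin n := ⟨jp + 1, hj⟩
        -- rows up to jp agree
        have hrow : ∀ m : Fin n, (m : ℕ) ≤ jp → U1 m = U2 m := by
          intro m hm
          have := IH (m : ℕ) (by omega) m.2
          simpa using this
        -- H entries with both rows ≤ jp agree
        have hHeq : ∀ m : Fin n, (m : ℕ) ≤ jp → H1 m jF = H2 m jF := by
          intro m hm
          rw [hU1d, hU2d, entry_formula, entry_formula]
          refine Finset.sum_congr rfl fun k _ => ?_
          rw [congrFun (hrow m hm) k, congrFun (hrow jF (le_refl _)) k]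
        -- the key identity
        have hkey : ∀ k : Fin n, H1 j1 jF * U1 j1 k = H2 j1 jF * U2 j1 k := by
          intro k
          have hsum : ∑ m, (H1 m jF * U1 m k - H2 m jF * U2 m k) = 0 := by
            rw [Finset.sum_sub_distrib]
            rw [← recurrence lams H1 U1 hU1o hU1d jF k,
              ← recurrence lams H2 U2 hU2o hU2d jF k,
              congrFun (hrow jF (le_refl _)) k]
            ring
          have hothers : ∀ m : Fin n, m ∈ Finset.univ → m ≠ j1 →
              H1 m jF * U1 m k - H2 m jF * U2 m k = 0 := by
            intro m _ hm
            rcases le_or_gt (m : ℕ) jp with h | h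
            · rw [hHeq m h, congrFun (hrow m h) k]; ring
            · have hgt : (jF : ℕ) + 1 < (m : ℕ) := by
                have : (m : ℕ) ≠ jp + 1 := fun hc => hm (Fin.ext hc)
                simp only [jF]; omega
              rw [ht1 m jF (Or.inr hgt), ht2 m jF (Or.inr hgt)]
              ring
          have := Finset.sum_eq_single_of_mem j1 (Finset.mem_univ j1) hothers
          rw [this] at hsum
          linarith
        have hc1 : H1 j1 jF < 0 := hneg1 j1 jF rfl
        have hc2 : H2 j1 jF < 0 := hneg2 j1 jF rfl
        -- compare squares
        have sqsum : ∀ (U : Matrix (Fin n) (Fin n) ℝ) (c : ℝ), U * Uᵀ = 1 →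
            ∑ k, (c * U j1 k) ^ 2 = c ^ 2 := by
          intro U c hU
          have he : ∀ k : Fin n, (c * U j1 k) ^ 2 = c ^ 2 * (U j1 k * U j1 k) :=
            fun k => by ring
          rw [Finset.sum_congr rfl fun k _ => he k, ← Finset.mul_sum,
            row_norm U hU j1, mul_one]
        have hsq : H1 j1 jF ^ 2 = H2 j1 jF ^ 2 := by
          rw [← sqsum U1 (H1 j1 jF) hU1o, ← sqsum U2 (H2 j1 jF) hU2o]
          exact Finset.sum_congr rfl fun k _ => by rw [hkey k]
        have hceq : H1 j1 jF = H2 j1 jF := by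
          have hz : (H1 j1 jF - H2 j1 jF) * (H1 j1 jF + H2 j1 jF) = 0 := by nlinarith
          rcases mul_eq_zero.1 hz with h | h
          · linarith
          · linarith
        funext k
        have := hkey k
        rw [← hceq] at this
        exact mul_left_cancel₀ (ne_of_lt hc1) this
  ext i k
  have := key (i : ℕ) i.2
  calc U1 i k = U1 ⟨(i : ℕ), i.2⟩ k := by rw [Fin.eta]
    _ = U2 i k := by rw [this, Fin.eta]

section Aux3
variable {n : ℕ}

/-- The diagonal operator as a linear map on Euclidean space. -/
noncomputable def Dlin (lams : Fin n → ℝ) :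
    EuclideanSpace ℝ (Fin n) →ₗ[ℝ] EuclideanSpace ℝ (Fin n) where
  toFun w := WithLp.toLp 2 (fun i => lams i * w i)
  map_add' w y := by
    ext i
    show lams i * (w i + y i) = lams i * w i + lams i * y i
    ring
  map_smul' c w := by
    ext i
    show lams i * (c * w i) = c * (lams i * w i)
    ring

lemma Dlin_apply (lams : Fin n → ℝ) (w : EuclideanSpace ℝ (Fin n)) (i : Fin n) :
    Dlin lams w i = lams i * w i := rfl

lemma inner_euc (w y : EuclideanSpace ℝ (Fin n)) : ⟪w, y⟫ = ∑ i, w i * y i := by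
  simp [PiLp.inner_apply, RCLike.inner_apply, starRingEnd_apply]
  exact Finset.sum_congr rfl fun _ _ => mul_comm _ _

lemma Dlin_symm (lams : Fin n → ℝ) (a b : EuclideanSpace ℝ (Fin n)) :
    ⟪a, Dlin lams b⟫ = ⟪b, Dlin lams a⟫ := by
  rw [inner_euc, inner_euc]
  refine Finset.sum_congr rfl fun k _ => ?_
  rw [Dlin_apply, Dlin_apply]; ring

lemma entry_formula' (lams : Fin n → ℝ) (U : Matrix (Fin n) (Fin n) ℝ)
    (i j : Fin n) :
    (U * diagonal lams * Uᵀ) i j = ∑ k, lams k * (U i k * U j k) := by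
  rw [Matrix.mul_apply]
  refine Finset.sum_congr rfl fun k _ => ?_
  rw [Matrix.mul_diagonal]
  simp [Matrix.transpose_apply]; ring

lemma construction (hn : 0 < n) (lams : Fin n → ℝ) (hinj : Function.Injective lams)
    (x : Fin n → ℝ) (hx1 : (∑ i, x i ^ 2) = 1) (hxpos : ∀ i, 0 < x i) :
    ∃ H U : Matrix (Fin n) (Fin n) ℝ, U * Uᵀ = 1 ∧ Uᵀ * U = 1 ∧
      H = U * Matrix.diagonal lams * Uᵀ ∧ (∀ j, U ⟨0, hn⟩ j = x j) ∧ H ∈ TLam lams := by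
  classical
  obtain ⟨m, rfl⟩ : ∃ m, n = m + 1 := ⟨n - 1, by omega⟩
  -- the Krylov family
  set v : Fin (m + 1) → EuclideanSpace ℝ (Fin (m + 1)) :=
    fun k => WithLp.toLp 2 (fun i => lams i ^ (k : ℕ) * x i : Fin (m + 1) → ℝ) with hv
  have hxne : ∀ i, x i ≠ 0 := fun i => ne_of_gt (hxpos i)
  -- linear independence of the Krylov family
  have hli : LinearIndependent ℝ v := by
    set M : Matrix (Fin (m + 1)) (Fin (m + 1)) ℝ := Matrix.of fun k i => lams i ^ (k : ℕ) * x i with hM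
    have hMeq : M = (Matrix.vandermonde lams)ᵀ * Matrix.diagonal x := by
      ext k i
      rw [Matrix.mul_diagonal]
      simp [hM, Matrix.vandermonde]
    have hMdet : M.det ≠ 0 := by
      rw [hMeq, Matrix.det_mul, Matrix.det_transpose, Matrix.det_diagonal]
      exact mul_ne_zero (Matrix.det_vandermonde_ne_zero_iff.mpr hinj)
        (Finset.prod_ne_zero_iff.mpr fun i _ => hxne i)
    have hMu : IsUnit M := (Matrix.isUnit_iff_isUnit_det M).mpr (isUnit_iff_ne_zero.mpr hMdet)
    have hrows : LinearIndependent ℝ (fun k => M k) :=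
      Matrix.linearIndependent_rows_iff_isUnit.mpr hMu
    exact hrows.map' (WithLp.linearEquiv 2 ℝ (Fin (m + 1) → ℝ)).symm.toLinearMap
      (LinearEquiv.ker _)
  haveI : WellFoundedLT (Fin (m + 1)) := inferInstance
  set g : Fin (m + 1) → EuclideanSpace ℝ (Fin (m + 1)) := gramSchmidt ℝ v with hg
  set q : Fin (m + 1) → EuclideanSpace ℝ (Fin (m + 1)) := gramSchmidtNormed ℝ v with hq
  have hON : Orthonormal ℝ q := gramSchmidtNormed_orthonormal hli
  have hgne : ∀ j, g j ≠ 0 := fun j => gramSchmidt_ne_zero j hli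
  have hgnorm : ∀ j, (0 : ℝ) < ‖g j‖ := fun j => norm_pos_iff.mpr (hgne j)
  have hqg : ∀ j, q j = (‖g j‖)⁻¹ • g j := fun j => rfl
  -- span facts
  have hq_in : ∀ j, q j ∈ span ℝ (v '' Set.Iic j) := by
    intro j
    rw [hqg]
    exact smul_mem _ _ (gramSchmidt_mem_span ℝ v le_rfl)
  have hv_in : ∀ j, v j ∈ span ℝ (q '' Set.Iic j) := by
    intro j
    rw [hq, span_gramSchmidtNormed]
    exact mem_span_gramSchmidt ℝ v le_rfl
  have hvq : ∀ s : Set (Fin (m + 1)), (∀ k ∈ s, Set.Iic k ⊆ s) →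
      span ℝ (v '' s) ≤ span ℝ (q '' s) := by
    intro s hs
    rw [span_le]
    rintro y ⟨k, hk, rfl⟩
    exact span_mono (Set.image_mono (hs k hk)) (hv_in k)
  -- orthogonality of q i to spans of other q's
  have horto : ∀ (i : Fin (m + 1)) (s : Set (Fin (m + 1))), i ∉ s →
      ∀ w ∈ span ℝ (q '' s), ⟪q i, w⟫ = 0 := by
    intro i s his w hw
    induction hw using Submodule.span_induction with
    | mem y hy =>
      obtain ⟨k, hk, rfl⟩ := hy
      exact hON.2 (fun h : i = k => his (h ▸ hk))
    | zero => simp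
    | add a b _ _ ha hb => rw [inner_add_right, ha, hb, add_zero]
    | smul c a _ ha => rw [inner_smul_right, ha, mul_zero]
  -- Dlin maps Krylov vectors forward
  have hDv : ∀ (k : Fin (m + 1)) (h : (k : ℕ) + 1 < m + 1),
      Dlin lams (v k) = v ⟨(k : ℕ) + 1, h⟩ := by
    intro k h
    ext i
    rw [Dlin_apply]
    show lams i * (lams i ^ (k : ℕ) * x i) = lams i ^ ((k : ℕ) + 1) * x i
    rw [pow_succ]; ring
  -- Dlin maps Krylov spans forward
  have hDspan : ∀ (j : Fin (m + 1)) (hj : (j : ℕ) + 1 < m + 1) (w),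
      w ∈ span ℝ (v '' Set.Iic j) →
      Dlin lams w ∈ span ℝ (v '' Set.Iic ⟨(j : ℕ) + 1, hj⟩) := by
    intro j hj w hw
    induction hw using Submodule.span_induction with
    | mem y hy =>
      obtain ⟨k, hk, rfl⟩ := hy
      have hk' : (k : ℕ) ≤ (j : ℕ) := hk
      have hkn : (k : ℕ) + 1 < m + 1 := by omega
      rw [hDv k hkn]
      exact subset_span ⟨⟨(k : ℕ) + 1, hkn⟩, by
        simp only [Set.mem_Iic, Fin.le_def]; omega, rfl⟩
    | zero => rw [map_zero]; exact zero_mem _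
    | add a b _ _ ha hb => rw [map_add]; exact add_mem ha hb
    | smul c a _ ha => rw [_root_.map_smul]; exact smul_mem _ _ ha
  have hDspan' : ∀ (j : Fin (m + 1)) (w), w ∈ span ℝ (v '' Set.Iio j) →
      Dlin lams w ∈ span ℝ (v '' Set.Iic j) := by
    intro j w hw
    induction hw using Submodule.span_induction with
    | mem y hy =>
      obtain ⟨k, hk, rfl⟩ := hy
      have hk' : (k : ℕ) < (j : ℕ) := hk
      have hkn : (k : ℕ) + 1 < m + 1 := by omega
      rw [hDv k hkn]
      exact subset_span ⟨⟨(k : ℕ) + 1, hkn⟩, by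
        simp only [Set.mem_Iic, Fin.le_def]; omega, rfl⟩
    | zero => rw [map_zero]; exact zero_mem _
    | add a b _ _ ha hb => rw [map_add]; exact add_mem ha hb
    | smul c a _ ha => rw [_root_.map_smul]; exact smul_mem _ _ ha
  -- the Gram-Schmidt residual decomposition
  have hsplit : ∀ j, v j - g j ∈ span ℝ (v '' Set.Iio j) := by
    intro j
    have h := gramSchmidt_def' ℝ v j
    have h2 := sub_eq_iff_eq_add'.mpr h
    rw [hg, h2, ← span_gramSchmidt_Iio ℝ v j]
    refine Submodule.sum_mem _ fun i hi => ?_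
    have hmem := Submodule.starProjection_apply_mem (ℝ ∙ gramSchmidt ℝ v i) (v j)
    refine span_mono ?_ hmem
    rw [Set.singleton_subset_iff]
    exact ⟨i, Finset.mem_Iio.mp hi, rfl⟩
  -- far-apart inner products vanish
  have hbeta0 : ∀ i j : Fin (m + 1), (j : ℕ) + 1 < (i : ℕ) →
      ⟪q i, Dlin lams (q j)⟫ = 0 := by
    intro i j h
    have hj1 : (j : ℕ) + 1 < m + 1 := lt_trans h i.isLt
    have h1 : Dlin lams (q j) ∈ span ℝ (q '' Set.Iic ⟨(j : ℕ) + 1, hj1⟩) :=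
      hvq _ (fun k hk => Set.Iic_subset_Iic.mpr hk) (hDspan j hj1 _ (hq_in j))
    refine horto i _ (fun hc => ?_) _ h1
    rw [Set.mem_Iic, Fin.le_def] at hc
    simp only [Fin.val_mk] at hc
    omega
  -- the subdiagonal inner product is positive
  have hbpos : ∀ (j : Fin (m + 1)) (hj : (j : ℕ) + 1 < m + 1),
      0 < ⟪q ⟨(j : ℕ) + 1, hj⟩, Dlin lams (q j)⟫ := by
    intro j hj
    set j1 : Fin (m + 1) := ⟨(j : ℕ) + 1, hj⟩ with hj1def
    have hwmem : v j - g j ∈ span ℝ (v '' Set.Iio j) := hsplit j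
    have hqj : q j = ‖g j‖⁻¹ • (v j - (v j - g j)) := by rw [hqg]; congr 1; abel
    have hDq : Dlin lams (q j) = ‖g j‖⁻¹ • (v j1 - Dlin lams (v j - g j)) := by
      rw [hqj, _root_.map_smul, map_sub, hDv j hj]
    have hz1 : ⟪q j1, Dlin lams (v j - g j)⟫ = 0 := by
      have h1 : Dlin lams (v j - g j) ∈ span ℝ (q '' Set.Iic j) :=
        hvq _ (fun k hk => Set.Iic_subset_Iic.mpr hk) (hDspan' j _ hwmem)
      refine horto j1 _ (fun hc => ?_) _ h1
      rw [Set.mem_Iic, Fin.le_def] at hc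
      simp only [Fin.val_mk, hj1def] at hc
      omega
    have hz2 : ⟪q j1, v j1 - g j1⟫ = 0 := by
      have h1 : v j1 - g j1 ∈ span ℝ (q '' Set.Iio j1) :=
        hvq _ (fun k hk => Set.Iic_subset_Iio.mpr hk) (hsplit j1)
      exact horto j1 (Set.Iio j1) (fun hc => lt_irrefl j1 hc) _ h1
    have hinner_g : ⟪q j1, g j1⟫ = ‖g j1‖ := by
      rw [hqg j1, real_inner_smul_left, real_inner_self_eq_norm_sq, sq,
        inv_mul_cancel_left₀ (ne_of_gt (hgnorm j1))]
    have hqv : ⟪q j1, v j1⟫ = ‖g j1‖ := by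
      have hvg : v j1 = g j1 + (v j1 - g j1) := by abel
      rw [hvg, inner_add_right, hz2, add_zero, hinner_g]
    have hfinal : ⟪q j1, Dlin lams (q j)⟫ = ‖g j‖⁻¹ * ‖g j1‖ := by
      rw [hDq, real_inner_smul_right, inner_sub_right, hqv, hz1, sub_zero]
    rw [hfinal]
    exact mul_pos (inv_pos.mpr (hgnorm j)) (hgnorm j1)
  -- the orthogonal matrix and the Jacobi matrix
  set U : Matrix (Fin (m + 1)) (Fin (m + 1)) ℝ :=
    Matrix.of fun i j => (-1 : ℝ) ^ (i : ℕ) * q i j with hU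
  have hUapp : ∀ i j, U i j = (-1 : ℝ) ^ (i : ℕ) * q i j := fun i j => rfl
  have hdot : ∀ i j, ∑ k, U i k * U j k = (-1 : ℝ) ^ ((i : ℕ) + (j : ℕ)) * ⟪q i, q j⟫ := by
    intro i j
    rw [inner_euc, Finset.mul_sum]
    refine Finset.sum_congr rfl fun k _ => ?_
    rw [hUapp, hUapp, pow_add]; ring
  have hUUt : U * Uᵀ = 1 := by
    ext i j
    rw [Matrix.mul_apply]
    have he : ∑ k, U i k * Uᵀ k j = ∑ k, U i k * U j k := rfl
    rw [he, hdot]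
    by_cases hij : i = j
    · subst hij
      have h1 : ⟪q i, q i⟫ = 1 := by
        rw [real_inner_self_eq_norm_sq, hON.1 i]; norm_num
      rw [h1, mul_one, Matrix.one_apply_eq]
      exact Even.neg_one_pow ⟨(i : ℕ), rfl⟩
    · rw [hON.2 hij, mul_zero, Matrix.one_apply_ne hij]
  have hUtU : Uᵀ * U = 1 := mul_eq_one_comm.mp hUUt
  set H : Matrix (Fin (m + 1)) (Fin (m + 1)) ℝ := U * Matrix.diagonal lams * Uᵀ with hHdef
  have hHent : ∀ i j, H i j = (-1 : ℝ) ^ ((i : ℕ) + (j : ℕ)) * ⟪q i, Dlin lams (q j)⟫ := by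
    intro i j
    rw [hHdef, entry_formula', inner_euc, Finset.mul_sum]
    refine Finset.sum_congr rfl fun k _ => ?_
    rw [hUapp, hUapp, Dlin_apply, pow_add]; ring
  -- first row of U is x
  have hq0 : ∀ k, q ⟨0, hn⟩ k = x k := by
    intro k
    set z : Fin (m + 1) := ⟨0, hn⟩ with hz
    have hIio0 : Finset.Iio z = ∅ := by
      ext a
      simp [Fin.lt_def, hz]
    have hg0 : g z = v z := by
      rw [hg, gramSchmidt_def, hIio0, Finset.sum_empty, sub_zero]
    have hvzx : ∀ i, v z i = x i := by
      intro i
      show lams i ^ ((z : Fin (m + 1)) : ℕ) * x i = x i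
      rw [hz]
      simp
    have hnorm : ‖v z‖ = 1 := by
      rw [EuclideanSpace.norm_eq]
      have he : ∀ i : Fin (m + 1), ‖v z i‖ ^ 2 = x i ^ 2 := by
        intro i
        rw [hvzx i, Real.norm_eq_abs, sq_abs]
      rw [Finset.sum_congr rfl fun i _ => he i, hx1, Real.sqrt_one]
    have h1 : q z k = ‖g z‖⁻¹ * g z k := rfl
    rw [h1, hg0, hnorm, inv_one, one_mul, hvzx k]
  have hrow : ∀ jj, U ⟨0, hn⟩ jj = x jj := by
    intro jj
    rw [hUapp]
    simp only [Fin.val_mk, pow_zero, one_mul]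
    exact hq0 jj
  -- symmetry
  have hsymm : H.IsSymm := by
    show Hᵀ = H
    rw [hHdef]
    rw [Matrix.transpose_mul, Matrix.transpose_mul, Matrix.transpose_transpose,
      Matrix.diagonal_transpose, Matrix.mul_assoc]
  -- tridiagonal
  have htri : IsTridiagonal H := by
    intro i j hc
    rcases hc with h | h
    · rw [hHent, Dlin_symm lams (q i) (q j), hbeta0 j i h, mul_zero]
    · rw [hHent, hbeta0 i j h, mul_zero]
  -- negative subdiagonal
  have hneg : ∀ i j : Fin (m + 1), (j : ℕ) + 1 = (i : ℕ) → H i j < 0 := by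
    intro i j hji
    have hj1 : (j : ℕ) + 1 < m + 1 := hji ▸ i.isLt
    have hi : i = ⟨(j : ℕ) + 1, hj1⟩ := Fin.ext hji.symm
    rw [hi, hHent]
    simp only [Fin.val_mk]
    have hodd : ((-1 : ℝ)) ^ (((j : ℕ) + 1) + (j : ℕ)) = -1 :=
      Odd.neg_one_pow ⟨(j : ℕ), by ring⟩
    rw [hodd]
    nlinarith [hbpos j hj1]
  -- spectrum
  have hspec : spectrum ℝ H = Set.range lams := by
    let u : (Matrix (Fin (m + 1)) (Fin (m + 1)) ℝ)ˣ := ⟨U, Uᵀ, hUUt, hUtU⟩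
    have hcon : spectrum ℝ ((u : Matrix (Fin (m + 1)) (Fin (m + 1)) ℝ) *
        Matrix.diagonal lams * ((u⁻¹ : (Matrix (Fin (m + 1)) (Fin (m + 1)) ℝ)ˣ) :
          Matrix (Fin (m + 1)) (Fin (m + 1)) ℝ)) = spectrum ℝ (Matrix.diagonal lams) :=
      spectrum.units_conjugate
    have : spectrum ℝ H = spectrum ℝ (Matrix.diagonal lams) := hcon
    rw [this, spectrum_diagonal]
  exact ⟨H, U, hUUt, hUtU, hHdef, hrow, hsymm, htri, hneg, hspec⟩

end Aux3

/-- The map `φ` sending `H ∈ T_Λ` to the (positive) first row of the unique orthogonal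
matrix `U` with `H = U diag(λ) Uᵀ` and `U(1,j) > 0` for all `j` is a bijection from `T_Λ`
onto `S^{n-1}_{>0}`. -/
theorem phi_bijOn
    (n : ℕ) (hn : 1 ≤ n) (lams : Fin n → ℝ) (hanti : StrictAnti lams)
    (hpos : ∀ i, 0 < lams i)
    (phi : Matrix (Fin n) (Fin n) ℝ → (Fin n → ℝ))
    (hphi : ∀ H ∈ TLam lams, ∃ U : Matrix (Fin n) (Fin n) ℝ,
      U * Uᵀ = 1 ∧ Uᵀ * U = 1 ∧ H = U * Matrix.diagonal lams * Uᵀ ∧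
      (∀ j, 0 < U ⟨0, by omega⟩ j) ∧ phi H = fun j => U ⟨0, by omega⟩ j) :
    Set.BijOn phi (TLam lams) (SposSet n) := by
  have hinj : Function.Injective lams := hanti.injective
  refine ⟨?_, ?_, ?_⟩
  · -- maps to
    intro H hH
    obtain ⟨U, hU1, hU2, hUd, hUpos, hphiH⟩ := hphi H hH
    constructor
    · rw [hphiH]
      have hr := row_norm U hU1 ⟨0, by omega⟩
      simpa [pow_two] using hr
    · intro i
      rw [hphiH]
      exact hUpos i
  · -- injectivity
    intro H1 h1 H2 h2 heq
    obtain ⟨U1, hU11, hU12, hU1d, hU1pos, hphi1⟩ := hphi H1 h1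
    obtain ⟨U2, hU21, hU22, hU2d, hU2pos, hphi2⟩ := hphi H2 h2
    obtain ⟨hs1, ht1, hneg1, hsp1⟩ := h1
    obtain ⟨hs2, ht2, hneg2, hsp2⟩ := h2
    have h0 : ∀ h : 0 < n, U1 ⟨0, h⟩ = U2 ⟨0, h⟩ := by
      intro h
      have hfe : (fun j => U1 ⟨0, by omega⟩ j) = (fun j => U2 ⟨0, by omega⟩ j) := by
        rw [← hphi1, ← hphi2, heq]
      exact funext fun k => congrFun hfe k
    have hUeq : U1 = U2 :=
      lanczos_unique lams H1 H2 U1 U2 ht1 hneg1 ht2 hneg2 hU11 hU1d hU21 hU2d h0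
    rw [hU1d, hU2d, hUeq]
  · -- surjectivity
    intro x hx
    obtain ⟨hx1, hxpos⟩ := hx
    obtain ⟨H, U, hU1, hU2, hUd, hrow, hmem⟩ :=
      construction (by omega : 0 < n) lams hinj x hx1 hxpos
    refine ⟨H, hmem, ?_⟩
    obtain ⟨V, hV1, hV2, hVd, hVpos, hphiH⟩ := hphi H hmem
    have hUV : U = V :=
      U_unique lams hinj U V hU1 hU2 hV1 hV2 (by rw [← hUd, ← hVd]) ⟨0, by omega⟩
        (fun j => by rw [hrow j]; exact hxpos j) hVpos
    rw [hphiH]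
    funext j
    rw [← hUV]
    exact hrow j
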